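/- arXiv:2504.15273 — 2 statements merged into one kernel-verified Lean document; each statement's English description precedes it below -/
import Mathlib

section
/- Suppose ν₀, ν₁ : [a,b] → ℝ are monotone increasing with ν₁ ≥ ν₀ pointwise, F₀, F₁ are CDFs on [a,b] with F₁(s) ≤ F₀(s) for all s, and the 'true' subgroup effect ∫ ν₁ dF₁ - ∫ ν₀ dF₀ equals 0. Then the surrogate-based subgroup effect ∫ ν₀ dF₁ - ∫ ν₀ dF₀ also equals 0. -/
open MeasureTheory Set

/-- Dominance of `Iio` measures from dominance of `Iic` measures. -/
lemma iio_dom (μ₀ μ₁ : Measure ℝ) (hdom : ∀ s : ℝ, μ₁ (Iic s) ≤ μ₀ (Iic s)) (c : ℝ) :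
    μ₁ (Iio c) ≤ μ₀ (Iio c) := by
  have hun : Iio c = ⋃ n : ℕ, Iic (c - 1 / (n + 1)) := by
    ext x
    simp only [mem_Iio, mem_iUnion, mem_Iic]
    constructor
    · intro hx
      obtain ⟨n, hn⟩ := exists_nat_one_div_lt (sub_pos.mpr hx)
      exact ⟨n, by linarith [hn]⟩
    · rintro ⟨n, hn⟩
      have : (0 : ℝ) < 1 / (n + 1) := by positivity
      linarith
  have hmono : Monotone (fun n : ℕ => Iic (c - 1 / (n + 1))) := by
    intro m n hmn
    apply Iic_subset_Iic.mpr
    have : (1 : ℝ) / (n + 1) ≤ 1 / (m + 1) := by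
      apply one_div_le_one_div_of_le (by positivity)
      exact_mod_cast by exact_mod_cast add_le_add_left (Nat.cast_le.mpr hmn) 1
    linarith
  rw [hun, Directed.measure_iUnion hmono.directed_le, Directed.measure_iUnion hmono.directed_le]
  exact iSup_mono fun n => hdom _

/-- Stochastic dominance: upper-level sets of a monotone function have larger measure
under the dominating measure. -/
lemma level_dom (μ₀ μ₁ : Measure ℝ) [IsProbabilityMeasure μ₀] [IsProbabilityMeasure μ₁]
    (hdom : ∀ s : ℝ, μ₁ (Iic s) ≤ μ₀ (Iic s)) (f : ℝ → ℝ) (hf : Monotone f) (t : ℝ) :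
    μ₀ {x : ℝ | t < f x} ≤ μ₁ {x : ℝ | t < f x} := by
  set L : Set ℝ := {x : ℝ | f x ≤ t} with hL
  have hLlow : ∀ x ∈ L, ∀ y, y ≤ x → y ∈ L := fun x hx y hyx => le_trans (hf hyx) hx
  have hLdom : μ₁ L ≤ μ₀ L := by
    rcases eq_empty_or_nonempty L with h | hne
    · simp [h]
    by_cases h : L = univ
    · simp [h]
    · obtain ⟨u, hu⟩ := nonempty_compl.mpr h
      have hbdd : BddAbove L := ⟨u, fun x hx => by
        by_contra h
        exact hu (hLlow x hx u (le_of_not_ge h))⟩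
      set c := sSup L with hc
      by_cases hcL : c ∈ L
      · have : L = Iic c := by
          ext x
          exact ⟨fun hx => le_csSup hbdd hx, fun hx => hLlow c hcL x hx⟩
        rw [this]; exact hdom c
      · have : L = Iio c := by
          ext x
          constructor
          · intro hx
            exact lt_of_le_of_ne (le_csSup hbdd hx) (fun h => hcL (by rw [hc, ← h]; exact hx))
          · intro hx
            obtain ⟨y, hy, hxy⟩ := exists_lt_of_lt_csSup hne hx
            exact hLlow y hy x hxy.le
        rw [this]; exact iio_dom μ₀ μ₁ hdom c
  have hLm : MeasurableSet L := (hf.measurable measurableSet_Iic : MeasurableSet (f ⁻¹' Iic t))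
  have hSc : {x : ℝ | t < f x} = Lᶜ := by ext x; simp [hL, not_le]
  rw [hSc, measure_compl hLm (measure_ne_top _ _), measure_compl hLm (measure_ne_top _ _),
    measure_univ, measure_univ]
  exact tsub_le_tsub_left hLdom 1

/-- Stochastic dominance integral inequality for a monotone nonnegative integrable function. -/
lemma integral_dom (μ₀ μ₁ : Measure ℝ) [IsProbabilityMeasure μ₀] [IsProbabilityMeasure μ₁]
    (hdom : ∀ s : ℝ, μ₁ (Iic s) ≤ μ₀ (Iic s)) (f : ℝ → ℝ) (hf : Monotone f)
    (hnn : ∀ x, 0 ≤ f x) (h0 : Integrable f μ₀) (h1 : Integrable f μ₁) :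
    ∫ x, f x ∂μ₀ ≤ ∫ x, f x ∂μ₁ := by
  have key₀ := lintegral_eq_lintegral_meas_lt μ₀ (Filter.Eventually.of_forall hnn)
    hf.measurable.aemeasurable
  have key₁ := lintegral_eq_lintegral_meas_lt μ₁ (Filter.Eventually.of_forall hnn)
    hf.measurable.aemeasurable
  have hle : ∫⁻ x, ENNReal.ofReal (f x) ∂μ₀ ≤ ∫⁻ x, ENNReal.ofReal (f x) ∂μ₁ := by
    rw [key₀, key₁]
    exact lintegral_mono fun t => level_dom μ₀ μ₁ hdom f hf t
  rw [integral_eq_lintegral_of_nonneg_ae (Filter.Eventually.of_forall hnn) h0.aestronglyMeasurable,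
    integral_eq_lintegral_of_nonneg_ae (Filter.Eventually.of_forall hnn) h1.aestronglyMeasurable]
  exact ENNReal.toReal_mono h1.lintegral_lt_top.ne hle

/-- if the true subgroup effect is zero, so is the surrogate-based effect. -/
theorem stmt4 (a b : ℝ) (hab : a ≤ b)
    (ν₀ ν₁ : ℝ → ℝ) (hν₀ : MonotoneOn ν₀ (Icc a b)) (hν₁ : MonotoneOn ν₁ (Icc a b))
    (hle : ∀ s ∈ Icc a b, ν₀ s ≤ ν₁ s)
    (μ₀ μ₁ : Measure ℝ) [IsProbabilityMeasure μ₀] [IsProbabilityMeasure μ₁]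
    (hs₀ : μ₀ (Icc a b)ᶜ = 0) (hs₁ : μ₁ (Icc a b)ᶜ = 0)
    (hdom : ∀ s : ℝ, μ₁ (Iic s) ≤ μ₀ (Iic s))
    (hi₀ : Integrable ν₀ μ₀) (hi₁ : Integrable ν₁ μ₁) (hi₀₁ : Integrable ν₀ μ₁)
    (hzero : (∫ s, ν₁ s ∂μ₁) - (∫ s, ν₀ s ∂μ₀) = 0) :
    (∫ s, ν₀ s ∂μ₁) - (∫ s, ν₀ s ∂μ₀) = 0 := by
  have hae₀ : ∀ᵐ x ∂μ₀, x ∈ Icc a b := by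
    rw [ae_iff, ← Set.compl_def]
    exact hs₀
  have hae₁ : ∀ᵐ x ∂μ₁, x ∈ Icc a b := by
    rw [ae_iff, ← Set.compl_def]
    exact hs₁
  -- upper bound: ∫ ν₀ dμ₁ ≤ ∫ ν₁ dμ₁ = ∫ ν₀ dμ₀
  have hub : (∫ s, ν₀ s ∂μ₁) ≤ (∫ s, ν₀ s ∂μ₀) := by
    have h1 : (∫ s, ν₀ s ∂μ₁) ≤ (∫ s, ν₁ s ∂μ₁) :=
      integral_mono_ae hi₀₁ hi₁ (hae₁.mono fun x hx => hle x hx)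
    linarith [sub_eq_zero.mp hzero]
  -- lower bound via stochastic dominance applied to the clamped, shifted function
  set g : ℝ → ℝ := fun x => ν₀ (projIcc a b hab x) with hg
  have hgmono : Monotone g := fun x y hxy =>
    hν₀ (projIcc a b hab x).2 (projIcc a b hab y).2 (monotone_projIcc hab hxy)
  have hgeq : ∀ x ∈ Icc a b, g x = ν₀ x := fun x hx => by
    simp [hg, projIcc_of_mem hab hx]
  set f : ℝ → ℝ := fun x => g x - ν₀ a with hfdef
  have hfmono : Monotone f := fun x y hxy => by
    simp only [hfdef]; linarith [hgmono hxy]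
  have hfnn : ∀ x, 0 ≤ f x := fun x => by
    have : ν₀ a ≤ g x := hν₀ (left_mem_Icc.mpr hab) (projIcc a b hab x).2
      (projIcc a b hab x).2.1
    simp only [hfdef]; linarith
  have hgeq₀ : g =ᵐ[μ₀] ν₀ := hae₀.mono fun x hx => hgeq x hx
  have hgeq₁ : g =ᵐ[μ₁] ν₀ := hae₁.mono fun x hx => hgeq x hx
  have hgint₀ : Integrable g μ₀ := hi₀.congr hgeq₀.symm
  have hgint₁ : Integrable g μ₁ := hi₀₁.congr hgeq₁.symm
  have hfint₀ : Integrable f μ₀ := hgint₀.sub (integrable_const _)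
  have hfint₁ : Integrable f μ₁ := hgint₁.sub (integrable_const _)
  have hkey := integral_dom μ₀ μ₁ hdom f hfmono hfnn hfint₀ hfint₁
  have hf₀ : ∫ x, f x ∂μ₀ = (∫ s, ν₀ s ∂μ₀) - ν₀ a := by
    rw [show (∫ x, f x ∂μ₀) = (∫ x, g x ∂μ₀) - ∫ _, ν₀ a ∂μ₀ from
      integral_sub hgint₀ (integrable_const _), integral_congr_ae hgeq₀]
    simp
  have hf₁ : ∫ x, f x ∂μ₁ = (∫ s, ν₀ s ∂μ₁) - ν₀ a := by
    rw [show (∫ x, f x ∂μ₁) = (∫ x, g x ∂μ₁) - ∫ _, ν₀ a ∂μ₁ from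
      integral_sub hgint₁ (integrable_const _), integral_congr_ae hgeq₁]
    simp
  rw [hf₀, hf₁] at hkey
  linarith
end

section
/- Under assumptions (C1)-(C4) and (C7), if Δ_B = 0 then Δ_P = 0, where Δ_B and Δ_P are the pooled decompositions Δ_B = π A₁ + (1−π) A₂ and Δ_P = π P₁ + (1−π) A₂ with A₁ = ∫ν₁dF₁ − ∫ν₀dF₀, P₁ = ∫ν₀dF₁ − ∫ν₀dF₀, A₂ = ∫y dG₁ − ∫y dG₀. -/
open MeasureTheory Set

/-- Lower sets get smaller measure under the dominating (in FOSD sense) measure. -/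
private lemma lower_meas_le (μ₀ μ₁ : Measure ℝ) [IsProbabilityMeasure μ₀]
    [IsProbabilityMeasure μ₁] (hdom : ∀ s : ℝ, μ₁ (Iic s) ≤ μ₀ (Iic s))
    {L : Set ℝ} (hL : IsLowerSet L) : μ₁ L ≤ μ₀ L := by
  have hdomIio : ∀ c : ℝ, μ₁ (Iio c) ≤ μ₀ (Iio c) := by
    intro c
    have hset : Iio c = ⋃ n : ℕ, Iic (c - 1 / (n + 1)) := by
      ext x
      simp only [mem_Iio, mem_iUnion, mem_Iic]
      constructor
      · intro hx
        obtain ⟨n, hn⟩ := exists_nat_one_div_lt (sub_pos.mpr hx)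
        exact ⟨n, by push_cast at hn ⊢; linarith⟩
      · rintro ⟨n, hn⟩
        have : (0:ℝ) < 1 / (n + 1) := by positivity
        linarith
    have hmono : Monotone fun n : ℕ => Iic (c - 1 / ((n:ℝ) + 1)) := by
      intro m n hmn
      apply Iic_subset_Iic.mpr
      have : (1:ℝ) / (n + 1) ≤ 1 / (m + 1) := by
        apply one_div_le_one_div_of_le (by positivity)
        push_cast; exact_mod_cast by exact_mod_cast Nat.add_le_add_right hmn 1
      linarith
    rw [hset, hmono.directed_le.measure_iUnion,
        hmono.directed_le.measure_iUnion]
    exact iSup_mono fun n => hdom _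
  rcases eq_empty_or_nonempty L with rfl | hne
  · simp
  by_cases huniv : L = univ
  · subst huniv; simp
  obtain ⟨u, hu⟩ : ∃ u, u ∉ L := by
    by_contra h; push_neg at h; exact huniv (eq_univ_of_forall h)
  have hbdd : ∀ x ∈ L, x ≤ u := by
    intro x hx
    by_contra h; push_neg at h
    exact hu (hL h.le hx)
  set c := sSup L with hc
  by_cases hcL : c ∈ L
  · have : L = Iic c := by
      ext x
      exact ⟨fun hx => le_csSup ⟨u, hbdd⟩ hx, fun hx => hL hx hcL⟩
    rw [this]; exact hdom c
  · have : L = Iio c := by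
      ext x
      constructor
      · intro hx
        exact lt_of_le_of_ne (le_csSup ⟨u, hbdd⟩ hx) (fun h => hcL (show c ∈ L by rw [hc, ← h]; exact hx))
      · intro hx
        obtain ⟨y, hyL, hxy⟩ := exists_lt_of_lt_csSup hne hx
        exact hL hxy.le hyL
    rw [this]; exact hdomIio c

/-- First-order stochastic dominance implies ordering of integrals of a nonnegative
monotone function. -/
private lemma fosd_integral_le (g : ℝ → ℝ) (hg : Monotone g) (hnn : ∀ s, 0 ≤ g s)
    (μ₀ μ₁ : Measure ℝ) [IsProbabilityMeasure μ₀] [IsProbabilityMeasure μ₁]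
    (hdom : ∀ s : ℝ, μ₁ (Iic s) ≤ μ₀ (Iic s))
    (hi0 : Integrable g μ₀) (hi1 : Integrable g μ₁) :
    ∫ s, g s ∂μ₀ ≤ ∫ s, g s ∂μ₁ := by
  have hupper : ∀ t : ℝ, μ₀ {s | t < g s} ≤ μ₁ {s | t < g s} := by
    intro t
    have hLset : IsLowerSet {s : ℝ | g s ≤ t} := fun x y hxy hy => le_trans (hg hxy) hy
    have hMeas : MeasurableSet {s : ℝ | g s ≤ t} :=
      measurableSet_le hg.measurable measurable_const
    have h₀ : μ₀ {s | t < g s} = 1 - μ₀ {s | g s ≤ t} := by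
      have : {s : ℝ | t < g s} = {s : ℝ | g s ≤ t}ᶜ := by ext x; simp [not_le]
      rw [this, prob_compl_eq_one_sub hMeas]
    have h₁ : μ₁ {s | t < g s} = 1 - μ₁ {s | g s ≤ t} := by
      have : {s : ℝ | t < g s} = {s : ℝ | g s ≤ t}ᶜ := by ext x; simp [not_le]
      rw [this, prob_compl_eq_one_sub hMeas]
    rw [h₀, h₁]
    exact tsub_le_tsub_left (lower_meas_le μ₀ μ₁ hdom hLset) 1
  have key₀ := lintegral_eq_lintegral_meas_lt μ₀ (Filter.Eventually.of_forall hnn)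
    hg.measurable.aemeasurable
  have key₁ := lintegral_eq_lintegral_meas_lt μ₁ (Filter.Eventually.of_forall hnn)
    hg.measurable.aemeasurable
  have hlin : ∫⁻ s, ENNReal.ofReal (g s) ∂μ₀ ≤ ∫⁻ s, ENNReal.ofReal (g s) ∂μ₁ := by
    rw [key₀, key₁]
    exact lintegral_mono fun t => hupper t
  have heq₀ : ∫ s, g s ∂μ₀ = (∫⁻ s, ENNReal.ofReal (g s) ∂μ₀).toReal :=
    integral_eq_lintegral_of_nonneg_ae (Filter.Eventually.of_forall hnn) hi0.aestronglyMeasurable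
  have heq₁ : ∫ s, g s ∂μ₁ = (∫⁻ s, ENNReal.ofReal (g s) ∂μ₁).toReal :=
    integral_eq_lintegral_of_nonneg_ae (Filter.Eventually.of_forall hnn) hi1.aestronglyMeasurable
  rw [heq₀, heq₁]
  exact ENNReal.toReal_mono hi1.lintegral_lt_top.ne hlin

/-- Theorem 1.A: if `Δ_B = 0` then `Δ_P = 0`. -/
theorem stmt7 (a b : ℝ) (hab : a ≤ b) (p : ℝ) (hp : p ∈ Set.Icc (0:ℝ) 1)
    (ν₀ ν₁ : ℝ → ℝ) (hν₀ : MonotoneOn ν₀ (Icc a b)) (hν₁ : MonotoneOn ν₁ (Icc a b))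
    (hle : ∀ s ∈ Icc a b, ν₀ s ≤ ν₁ s)
    (μ₀ μ₁ : Measure ℝ) [IsProbabilityMeasure μ₀] [IsProbabilityMeasure μ₁]
    (hs₀ : μ₀ (Icc a b)ᶜ = 0) (hs₁ : μ₁ (Icc a b)ᶜ = 0)
    (hdom : ∀ s : ℝ, μ₁ (Iic s) ≤ μ₀ (Iic s))
    (hi₀ : Integrable ν₀ μ₀) (hi₁ : Integrable ν₁ μ₁) (hi₀₁ : Integrable ν₀ μ₁)
    (G₀ G₁ : Measure ℝ) [IsProbabilityMeasure G₀] [IsProbabilityMeasure G₁]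
    (hiG₀ : Integrable id G₀) (hiG₁ : Integrable id G₁)
    (hC7 : 0 ≤ (∫ y, y ∂G₁) - (∫ y, y ∂G₀))
    (hΔB : p * ((∫ s, ν₁ s ∂μ₁) - (∫ s, ν₀ s ∂μ₀))
      + (1 - p) * ((∫ y, y ∂G₁) - (∫ y, y ∂G₀)) = 0) :
    p * ((∫ s, ν₀ s ∂μ₁) - (∫ s, ν₀ s ∂μ₀))
      + (1 - p) * ((∫ y, y ∂G₁) - (∫ y, y ∂G₀)) = 0 := by
  obtain ⟨hp0, hp1⟩ := hp
  -- almost-everywhere membership in `Icc a b`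
  have hae₀ : ∀ᵐ s ∂μ₀, s ∈ Icc a b := by
    rw [ae_iff]
    convert hs₀ using 2
    rfl
  have hae₁ : ∀ᵐ s ∂μ₁, s ∈ Icc a b := by
    rw [ae_iff]
    convert hs₁ using 2
    rfl
  -- monotone extension of ν₀
  set proj : ℝ → ℝ := fun s => max a (min s b) with hproj
  have hprojmono : Monotone proj := monotone_const.max (monotone_id.min monotone_const)
  have hprojmem : ∀ s, proj s ∈ Icc a b :=
    fun s => ⟨le_max_left _ _, max_le hab (min_le_right _ _)⟩
  have hprojeq : ∀ s ∈ Icc a b, proj s = s := by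
    intro s hs
    simp only [hproj]
    rw [min_eq_left hs.2, max_eq_right hs.1]
  set f : ℝ → ℝ := fun s => ν₀ (proj s) with hf
  have hfmono : Monotone f := fun x y hxy => hν₀ (hprojmem x) (hprojmem y) (hprojmono hxy)
  have hfeq₀ : f =ᵐ[μ₀] ν₀ := by
    filter_upwards [hae₀] with s hs
    simp only [hf]; rw [hprojeq s hs]
  have hfeq₁ : f =ᵐ[μ₁] ν₀ := by
    filter_upwards [hae₁] with s hs
    simp only [hf]; rw [hprojeq s hs]
  have hif₀ : Integrable f μ₀ := hi₀.congr hfeq₀.symm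
  have hif₁ : Integrable f μ₁ := hi₀₁.congr hfeq₁.symm
  -- nonnegative shifted version
  set g : ℝ → ℝ := fun s => f s - ν₀ a with hg
  have hgmono : Monotone g := fun x y hxy => sub_le_sub_right (hfmono hxy) _
  have hgnn : ∀ s, 0 ≤ g s := by
    intro s
    have := hν₀ (left_mem_Icc.mpr hab) (hprojmem s) (hprojmem s).1
    simpa [hg, hf] using this
  have hfosd : ∫ s, g s ∂μ₀ ≤ ∫ s, g s ∂μ₁ :=
    fosd_integral_le g hgmono hgnn μ₀ μ₁ hdom (hif₀.sub (integrable_const _))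
      (hif₁.sub (integrable_const _))
  -- translate back to ν₀
  have hg₀ : ∫ s, g s ∂μ₀ = (∫ s, ν₀ s ∂μ₀) - ν₀ a := by
    rw [show ∫ s, g s ∂μ₀ = ∫ s, (f s - ν₀ a) ∂μ₀ from rfl,
        integral_sub hif₀ (integrable_const _), integral_const,
        integral_congr_ae hfeq₀]
    simp
  have hg₁ : ∫ s, g s ∂μ₁ = (∫ s, ν₀ s ∂μ₁) - ν₀ a := by
    rw [show ∫ s, g s ∂μ₁ = ∫ s, (f s - ν₀ a) ∂μ₁ from rfl,
        integral_sub hif₁ (integrable_const _), integral_const,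
        integral_congr_ae hfeq₁]
    simp
  have hP1 : (0:ℝ) ≤ (∫ s, ν₀ s ∂μ₁) - (∫ s, ν₀ s ∂μ₀) := by
    rw [hg₀, hg₁] at hfosd; linarith
  -- P₁ ≤ A₁
  have hle' : (∫ s, ν₀ s ∂μ₁) ≤ ∫ s, ν₁ s ∂μ₁ := by
    apply integral_mono_ae hi₀₁ hi₁
    filter_upwards [hae₁] with s hs
    exact hle s hs
  -- arithmetic conclusion
  set A1 := (∫ s, ν₁ s ∂μ₁) - (∫ s, ν₀ s ∂μ₀) with hA1
  set P1 := (∫ s, ν₀ s ∂μ₁) - (∫ s, ν₀ s ∂μ₀) with hP1def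
  set A2 := (∫ y, y ∂G₁) - (∫ y, y ∂G₀) with hA2
  have h1 : 0 ≤ p * P1 := mul_nonneg hp0 hP1
  have h2 : p * P1 ≤ p * A1 := mul_le_mul_of_nonneg_left (by simp only [hA1, hP1def]; linarith) hp0
  have h3 : 0 ≤ (1 - p) * A2 := mul_nonneg (by linarith) hC7
  linarith
end
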